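/- Let n ≥ 3 and let u_1, …, u_n be nonzero real numbers, with the cyclic convention u_{n+1} = u_1. Then the (n−1)×(n−1) real matrix Y, indexed by l, m ∈ {2, …, n}, whose diagonal entries are Y_{ll} = u_2²/u_1² + n(n−1)(n−3) + (n−1)²·u_{l+1}²/u_l² and whose off-diagonal entries all equal u_2²/u_1² − n(n−1), is positive semidefinite. -/

import Mathlib

open Matrix
open Finset

set_option maxHeartbeats 1000000

private lemma diamond {ι : Type*} [DecidableEq ι] :
    ∀ (m : ℕ) (s : Finset ι) (v : ι → ℝ), s.card = m + 1 → (∀ i ∈ s, 0 < v i) →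
    (∑ i ∈ s, v i) ^ 2 ≤ ((s.card : ℝ) - 1) * ∑ i ∈ s, v i ^ 2
      + (s.card : ℝ) * (∏ i ∈ s, v i) ^ ((2 : ℝ) / (s.card : ℝ)) := by
  intro m
  induction m with
  | zero =>
    intro s v hcard hv
    obtain ⟨i, rfl⟩ := Finset.card_eq_one.mp hcard
    have hvi := hv i (mem_singleton_self i)
    simp only [Finset.sum_singleton, Finset.prod_singleton, Finset.card_singleton,
      Nat.cast_one, div_one]
    rw [show (2:ℝ) = ((2:ℕ):ℝ) by norm_num, Real.rpow_natCast]
    norm_num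
  | succ m ih =>
    intro s v hcard hv
    obtain ⟨i₀, hi₀s, hmin⟩ := s.exists_min_image v (by rw [← Finset.card_pos, hcard]; omega)
    set s' := s.erase i₀ with hs'
    have hcard' : s'.card = m + 1 := by rw [hs', card_erase_of_mem hi₀s, hcard]; omega
    have hv' : ∀ i ∈ s', 0 < v i := fun i hi => hv i (mem_of_mem_erase hi)
    have IH := ih s' v hcard' hv'
    rw [hcard'] at IH
    set t := v i₀ with htdef
    have ht : 0 < t := hv i₀ hi₀s
    set S := ∑ i ∈ s', v i with hS
    set q := ∑ i ∈ s', v i ^ 2 with hq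
    set Pv := ∏ i ∈ s', v i with hPv
    have hPvpos : 0 < Pv := Finset.prod_pos hv'
    set M : ℕ := m + 1 with hMdef
    have hM0 : (M : ℝ) ≠ 0 := by positivity
    have hMpos : (0:ℝ) < M := by positivity
    have hM1 : (1:ℝ) ≤ (M:ℝ) := by exact_mod_cast Nat.one_le_iff_ne_zero.mpr (by omega)
    set c : ℝ := Pv ^ ((M:ℝ)⁻¹) with hc
    have hcpos : 0 < c := Real.rpow_pos_of_pos hPvpos _
    have hcM : c ^ (M:ℕ) = Pv := Real.rpow_inv_natCast_pow hPvpos.le (by omega)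
    -- AM-GM : M * c ≤ S
    have hAM : (M:ℝ) * c ≤ S := by
      have := Real.geom_mean_le_arith_mean_weighted s' (fun _ => (M:ℝ)⁻¹) v
        (fun i _ => by positivity)
        (by rw [Finset.sum_const, hcard', nsmul_eq_mul]; exact mul_inv_cancel₀ hM0)
        (fun i hi => (hv' i hi).le)
      rw [Real.finset_prod_rpow s' v (fun i hi => (hv' i hi).le) _, ← Finset.mul_sum] at this
      calc (M:ℝ) * c ≤ (M:ℝ) * ((M:ℝ)⁻¹ * S) := mul_le_mul_of_nonneg_left this hMpos.le
        _ = S := by field_simp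
    -- t ≤ c
    have htc : t ≤ c := by
      have h1 : t ^ (M:ℕ) ≤ Pv := by
        calc t ^ (M:ℕ) = ∏ _i ∈ s', t := by rw [Finset.prod_const, hcard']
          _ ≤ Pv := Finset.prod_le_prod (fun i _ => ht.le)
              (fun i hi => hmin i (mem_of_mem_erase hi))
      calc t = (t ^ (M:ℕ)) ^ ((M:ℝ)⁻¹) := (Real.pow_rpow_inv_natCast ht.le (by omega)).symm
        _ ≤ Pv ^ ((M:ℝ)⁻¹) := Real.rpow_le_rpow (by positivity) h1 (by positivity)
    -- Cauchy-Schwarz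
    have hCauchy : S ^ 2 ≤ (M:ℝ) * q := by
      have := sq_sum_le_card_mul_sum_sq (s := s') (f := v)
      rwa [hcard'] at this
    -- Bernoulli part
    set X : ℝ := ((M:ℝ) + 1) * ((t * Pv) ^ ((2:ℝ) / ((M:ℝ)+1))) with hX
    have hXbound : 2*(M:ℝ)*c*t - ((M:ℝ)-1)*t^2 ≤ X := by
      set p : ℝ := 2*(M:ℝ)/((M:ℝ)+1) with hp
      set e : ℝ := (2:ℝ)/((M:ℝ)+1) with he
      have hp1 : 1 ≤ p := by
        rw [hp, le_div_iff₀ (by positivity)]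
        linarith
      set rr : ℝ := c / t with hrr
      have hrr1 : 1 ≤ rr := (one_le_div ht).mpr htc
      have hBer : 1 + p * (rr - 1) ≤ rr ^ p := by
        have := one_add_mul_self_le_rpow_one_add (s := rr - 1) (by linarith) hp1
        simpa using this
      have hMe : (M:ℝ) * e = p := by rw [hp, he]; ring
      have h2p : (2:ℝ) - p = e := by
        rw [hp, he]
        field_simp
        ring
      have hPvc : Pv = c ^ ((M:ℕ):ℝ) := by rw [Real.rpow_natCast, hcM]
      have hXeq : (t * Pv) ^ e = rr ^ p * t ^ 2 := by
        have htp : (0:ℝ) < t ^ p := Real.rpow_pos_of_pos ht _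
        calc (t * Pv) ^ e = t ^ e * Pv ^ e := Real.mul_rpow ht.le hPvpos.le
          _ = t ^ e * c ^ p := by
              rw [hPvc, ← Real.rpow_mul hcpos.le, hMe]
          _ = (t ^ (2:ℝ) / t ^ p) * c ^ p := by rw [← h2p, Real.rpow_sub ht]
          _ = rr ^ p * t ^ 2 := by
              rw [hrr, Real.div_rpow hcpos.le ht.le,
                show (2:ℝ) = ((2:ℕ):ℝ) by norm_num, Real.rpow_natCast]
              field_simp
      rw [hX, hXeq]
      have hscale : (2*(M:ℝ)*rr - ((M:ℝ)-1)) * t^2 ≤ (((M:ℝ)+1) * rr ^ p) * t^2 := by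
        have hstep : 2*(M:ℝ)*rr - ((M:ℝ)-1) ≤ ((M:ℝ)+1) * rr ^ p := by
          have h2 : ((M:ℝ)+1) * (1 + p*(rr-1)) ≤ ((M:ℝ)+1) * rr ^ p :=
            mul_le_mul_of_nonneg_left hBer (by positivity)
          have h3 : ((M:ℝ)+1) * (1 + p*(rr-1)) = 2*(M:ℝ)*rr - ((M:ℝ)-1) := by
            rw [hp]; field_simp; ring
          linarith
        exact mul_le_mul_of_nonneg_right hstep (sq_nonneg t)
      have hrt : rr * t = c := by rw [hrr]; field_simp
      have h6 : 2*(M:ℝ)*c*t - ((M:ℝ)-1)*t^2 = (2*(M:ℝ)*rr - ((M:ℝ)-1)) * t^2 := by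
        rw [← hrt]; ring
      linarith [hscale]
    -- assemble
    have hsum : ∑ i ∈ s, v i = t + S := (Finset.add_sum_erase s v hi₀s).symm
    have hsumsq : ∑ i ∈ s, v i ^ 2 = t^2 + q := (Finset.add_sum_erase s (fun i => v i ^2) hi₀s).symm
    have hprod : ∏ i ∈ s, v i = t * Pv := (Finset.mul_prod_erase s v hi₀s).symm
    rw [hsum, hsumsq, hprod, hcard]
    have hcast : ((m + 1 + 1 : ℕ) : ℝ) = (M:ℝ) + 1 := by push_cast [hMdef]; ring
    rw [hcast]
    have hIH' : S ^ 2 ≤ ((M:ℝ) - 1) * q + (M:ℝ) * c ^ 2 := by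
      have : Pv ^ ((2:ℝ) / (M:ℝ)) = c ^ 2 := by
        rw [hc, ← Real.rpow_natCast (Pv ^ ((M:ℝ)⁻¹)) 2, ← Real.rpow_mul hPvpos.le]
        congr 1
        push_cast
        field_simp
      rw [this] at IH
      exact IH
    -- final quadratic assembly
    have h5 : 0 ≤ (S - (M:ℝ)*c) * (S + (M:ℝ)*c - 2*(M:ℝ)*t) := by
      apply mul_nonneg (by linarith)
      have : (M:ℝ)*t ≤ (M:ℝ)*c := mul_le_mul_of_nonneg_left htc hMpos.le
      linarith
    have hq' : (M:ℝ)*c^2 + 2*t*S - 2*(M:ℝ)*c*t ≤ q := by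
      have h7 : (M:ℝ) * ((M:ℝ)*c^2 + 2*t*S - 2*(M:ℝ)*c*t) ≤ (M:ℝ) * q := by
        nlinarith [h5, hCauchy]
      exact le_of_mul_le_mul_left h7 hMpos
    show (t + S)^2 ≤ ((M:ℝ) + 1 - 1) * (t^2 + q) + ((M:ℝ)+1) * (t*Pv) ^ ((2:ℝ)/((M:ℝ)+1))
    have hXdef : ((M:ℝ)+1) * (t*Pv) ^ ((2:ℝ)/((M:ℝ)+1)) = X := by rw [hX]
    rw [hXdef]
    clear_value t S q Pv M c X
    clear ih IH hv hmin hv' hCauchy hAM hcard hcard' hc hcM hX hS hq hPv htdef hs' hi₀s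
    nlinarith [hIH', hq', hXbound]

set_option maxHeartbeats 800000 in
private lemma keyPos (m : ℕ) (hm : 2 ≤ m) (a : ℝ) (ha : 0 < a) (r x : Fin m → ℝ)
    (hr : ∀ l, 0 < r l) (hprodra : a * ∏ l, r l = 1) (hx : ∀ l, 0 < x l) :
    0 ≤ a * (∑ l, x l)^2 + (m:ℝ)^2 * (∑ l, r l * x l ^ 2)
      + ((m:ℝ)+1) * (m:ℝ) * ((m:ℝ)-1) * (∑ l, x l ^ 2)
      - ((m:ℝ)+1) * (m:ℝ) * (∑ l, x l)^2 := by
  have hne : Nonempty (Fin m) := ⟨⟨0, by omega⟩⟩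
  set s := ∑ l, x l with hs
  set q := ∑ l, x l ^ 2 with hq
  have hspos : 0 < s := Finset.sum_pos (fun l _ => hx l) Finset.univ_nonempty
  have hqpos : 0 < q := Finset.sum_pos (fun l _ => pow_pos (hx l) 2) Finset.univ_nonempty
  have hrx : (0:ℝ) ≤ ∑ l, r l * x l ^ 2 :=
    Finset.sum_nonneg fun l _ => mul_nonneg (hr l).le (sq_nonneg _)
  have hm1 : (2:ℝ) ≤ (m:ℝ) := by exact_mod_cast hm
  set P : ℝ := s^2 - ((m:ℝ)-1) * q with hP
  by_cases hPle : P ≤ 0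
  · nlinarith [mul_nonneg (mul_nonneg (show (0:ℝ) ≤ (m:ℝ)+1 by linarith)
        (show (0:ℝ) ≤ (m:ℝ) by linarith)) (show (0:ℝ) ≤ -P by linarith),
      mul_nonneg ha.le (sq_nonneg s),
      mul_nonneg (show (0:ℝ) ≤ (m:ℝ)^2 by positivity) hrx]
  push_neg at hPle
  have hCau : s^2 ≤ (m:ℝ) * q := by
    have := sq_sum_le_card_mul_sum_sq (s := (Finset.univ : Finset (Fin m))) (f := x)
    rwa [Finset.card_univ, Fintype.card_fin] at this
  have hPs : (m:ℝ) * P ≤ s^2 := by nlinarith [hCau]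
  set G := ∏ l, x l with hG
  have hGpos : 0 < G := Finset.prod_pos fun l _ => hx l
  have hdia := diamond (m - 1) (Finset.univ : Finset (Fin m)) x
    (by rw [Finset.card_univ, Fintype.card_fin]; omega) (fun l _ => hx l)
  rw [Finset.card_univ, Fintype.card_fin] at hdia
  have hPdia : P ≤ (m:ℝ) * G ^ ((2:ℝ)/(m:ℝ)) := by rw [hP]; linarith [hdia]
  have hm0 : ((m:ℝ)) ≠ 0 := by positivity
  have hGm : (G ^ ((2:ℝ)/(m:ℝ))) ^ (m:ℕ) = G ^ 2 := by
    rw [← Real.rpow_natCast (G ^ ((2:ℝ)/(m:ℝ))) m, ← Real.rpow_mul hGpos.le,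
      div_mul_cancel₀ _ hm0, show (2:ℝ) = ((2:ℕ):ℝ) by norm_num, Real.rpow_natCast]
  have hPm : P ^ (m:ℕ) ≤ (m:ℝ)^(m:ℕ) * G^2 := by
    calc P^(m:ℕ) ≤ ((m:ℝ) * G ^ ((2:ℝ)/(m:ℝ)))^(m:ℕ) := pow_le_pow_left₀ hPle.le hPdia m
      _ = (m:ℝ)^(m:ℕ) * G^2 := by rw [mul_pow, hGm]
  have hmP0 : (0:ℝ) ≤ (m:ℝ) * P := by positivity
  have hMPn : ((m:ℝ)*P)^(m+1:ℕ) ≤ (m:ℝ)^(2*m:ℕ) * (s^2 * G^2) := by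
    calc ((m:ℝ)*P)^(m+1:ℕ) = ((m:ℝ)^(m:ℕ) * P^(m:ℕ)) * ((m:ℝ)*P) := by
          rw [pow_succ, mul_pow]
      _ ≤ ((m:ℝ)^(m:ℕ) * ((m:ℝ)^(m:ℕ) * G^2)) * s^2 := by
          apply mul_le_mul _ hPs hmP0 (by positivity)
          exact mul_le_mul_of_nonneg_left hPm (by positivity)
      _ = (m:ℝ)^(2*m:ℕ) * (s^2 * G^2) := by rw [two_mul, pow_add]; ring
  -- AM-GM over Option (Fin m)
  set w0 : ℝ := ((m+1 : ℕ) : ℝ) with hw0def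
  have hw0 : w0 = (m:ℝ) + 1 := by rw [hw0def]; push_cast; ring
  have hw0pos : 0 < w0 := by rw [hw0]; linarith
  set z : Option (Fin m) → ℝ :=
    fun o => Option.elim o (a * s^2) (fun l => (m:ℝ)^2 * r l * x l^2) with hz
  have hznn : ∀ o ∈ (Finset.univ : Finset (Option (Fin m))), (0:ℝ) ≤ z o := by
    rintro (_|l) _
    · simp only [hz, Option.elim]
      exact mul_nonneg ha.le (sq_nonneg _)
    · simp only [hz, Option.elim]
      exact mul_nonneg (mul_nonneg (sq_nonneg _) (hr l).le) (sq_nonneg _)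
  have hAMGM := Real.geom_mean_le_arith_mean_weighted Finset.univ (fun _ => w0⁻¹) z
    (fun _ _ => inv_nonneg.mpr hw0pos.le)
    (by rw [Finset.sum_const, Finset.card_univ, Fintype.card_option, Fintype.card_fin,
          nsmul_eq_mul]
        rw [← hw0def]
        exact mul_inv_cancel₀ (ne_of_gt hw0pos)) hznn
  rw [Real.finset_prod_rpow Finset.univ z hznn, ← Finset.mul_sum] at hAMGM
  have hprodz : ∏ o : Option (Fin m), z o = (m:ℝ)^(2*m:ℕ) * (s^2 * G^2) := by
    rw [Fintype.prod_option]
    simp only [hz, Option.elim]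
    rw [Finset.prod_mul_distrib, Finset.prod_mul_distrib, Finset.prod_const,
      Finset.card_univ, Fintype.card_fin]
    have hxg : ∏ l, x l ^ 2 = G^2 := by rw [hG, Finset.prod_pow]
    rw [hxg]
    linear_combination ((m:ℝ)^(2*m:ℕ) * (s^2*G^2)) * hprodra
  have hsumz : ∑ o : Option (Fin m), z o = a*s^2 + (m:ℝ)^2 * ∑ l, r l * x l^2 := by
    rw [Fintype.sum_option]
    simp only [hz, Option.elim]
    rw [Finset.mul_sum]
    congr 1
    exact Finset.sum_congr rfl fun l _ => by ring
  rw [hprodz, hsumz] at hAMGM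
  have hkey1 : (m:ℝ)*P ≤ ((m:ℝ)^(2*m:ℕ) * (s^2 * G^2)) ^ (w0⁻¹) := by
    have h1 : ((m:ℝ)*P) = (((m:ℝ)*P)^(m+1:ℕ)) ^ (w0⁻¹) := by
      rw [hw0def]
      exact (Real.pow_rpow_inv_natCast hmP0 (by omega)).symm
    rw [h1]
    exact Real.rpow_le_rpow (by positivity) hMPn (by positivity)
  have hfin : ((m:ℝ)+1) * ((m:ℝ)*P) ≤ a*s^2 + (m:ℝ)^2 * ∑ l, r l * x l^2 := by
    have h2 : (m:ℝ)*P ≤ w0⁻¹ * (a*s^2 + (m:ℝ)^2 * ∑ l, r l * x l^2) :=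
      le_trans hkey1 hAMGM
    have h3 := mul_le_mul_of_nonneg_left h2 hw0pos.le
    rw [mul_inv_cancel_left₀ (ne_of_gt hw0pos)] at h3
    calc ((m:ℝ)+1) * ((m:ℝ)*P) = w0 * ((m:ℝ)*P) := by rw [hw0]
      _ ≤ _ := h3
  have hexp : ((m:ℝ)+1)*(m:ℝ)*P
      = ((m:ℝ)+1)*(m:ℝ)*s^2 - ((m:ℝ)+1)*(m:ℝ)*((m:ℝ)-1)*q := by rw [hP]; ring
  clear_value s q P G z w0
  clear hAMGM hprodz hsumz hkey1 hdia hPdia hGm hPm hMPn hCau hPs hmP0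
  nlinarith [hfin, hexp]

set_option maxHeartbeats 800000 in
private lemma key (m : ℕ) (hm : 2 ≤ m) (a : ℝ) (ha : 0 < a) (r : Fin m → ℝ)
    (hr : ∀ l, 0 < r l) (hprodra : a * ∏ l, r l = 1) (x : Fin m → ℝ) :
    0 ≤ a * (∑ l, x l)^2 + (m:ℝ)^2 * (∑ l, r l * x l ^ 2)
      + ((m:ℝ)+1) * (m:ℝ) * ((m:ℝ)-1) * (∑ l, x l ^ 2)
      - ((m:ℝ)+1) * (m:ℝ) * (∑ l, x l)^2 := by
  have hm1 : (2:ℝ) ≤ (m:ℝ) := by exact_mod_cast hm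
  have hrx : (0:ℝ) ≤ ∑ l, r l * x l ^ 2 :=
    Finset.sum_nonneg fun l _ => mul_nonneg (hr l).le (sq_nonneg _)
  by_cases hPle : (∑ l, x l)^2 - ((m:ℝ)-1) * ∑ l, x l ^ 2 ≤ 0
  · nlinarith [mul_nonneg (mul_nonneg (show (0:ℝ) ≤ (m:ℝ)+1 by linarith)
        (show (0:ℝ) ≤ (m:ℝ) by linarith))
        (show (0:ℝ) ≤ ((m:ℝ)-1) * (∑ l, x l ^ 2) - (∑ l, x l)^2 by linarith),
      mul_nonneg ha.le (sq_nonneg (∑ l, x l)),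
      mul_nonneg (show (0:ℝ) ≤ (m:ℝ)^2 by positivity) hrx]
  push_neg at hPle
  have hxs : ∀ l, 0 < x l * ∑ j, x j := by
    intro l
    have h1 := Finset.add_sum_erase Finset.univ x (Finset.mem_univ l)
    have h2 := Finset.add_sum_erase Finset.univ (fun j => x j ^ 2) (Finset.mem_univ l)
    have hcs := sq_sum_le_card_mul_sum_sq (s := Finset.univ.erase l) (f := x)
    rw [Finset.card_erase_of_mem (Finset.mem_univ l), Finset.card_univ,
      Fintype.card_fin] at hcs
    have hc : ((m - 1 : ℕ):ℝ) = (m:ℝ) - 1 := by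
      rw [Nat.cast_sub (by omega)]; norm_num
    rw [hc] at hcs
    have herase : ∑ j ∈ Finset.univ.erase l, x j = (∑ j, x j) - x l := by linarith
    have heraseq : ∑ j ∈ Finset.univ.erase l, x j ^ 2 = (∑ j, x j ^ 2) - x l ^ 2 := by
      linarith
    rw [herase, heraseq] at hcs
    nlinarith [hcs, hPle,
      mul_nonneg (show (0:ℝ) ≤ (m:ℝ)-2 by linarith) (sq_nonneg (x l)), sq_nonneg (x l)]
  have hsne : (∑ j, x j) ≠ 0 := by
    intro h0
    have h1 := hxs ⟨0, by omega⟩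
    rw [h0, mul_zero] at h1
    exact lt_irrefl _ h1
  rcases hsne.lt_or_gt with hneg | hpos
  · have hx' : ∀ l, 0 < -x l := by
      intro l
      rcases mul_pos_iff.mp (hxs l) with ⟨h1, h2⟩ | ⟨h1, h2⟩
      · linarith
      · linarith
    have hres := keyPos m hm a ha r (fun l => -x l) hr hprodra hx'
    simp only [Finset.sum_neg_distrib, neg_sq, neg_neg] at hres
    exact hres
  · have hx' : ∀ l, 0 < x l := by
      intro l
      rcases mul_pos_iff.mp (hxs l) with ⟨h1, h2⟩ | ⟨h1, h2⟩
      · exact h1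
      · linarith
    exact keyPos m hm a ha r x hr hprodra hx'

private lemma quadform (m : ℕ) (D : Fin m → ℝ) (C : ℝ) (y : Fin m → ℝ) :
    ∑ i, y i * (∑ j, (if i = j then D i else C) * y j)
      = ∑ i, (D i - C) * y i ^ 2 + C * (∑ i, y i)^2 := by
  have h1 : ∀ i : Fin m, ∑ j, (if i = j then D i else C) * y j
      = (D i - C) * y i + C * ∑ j, y j := by
    intro i
    have h2 : ∀ j : Fin m, (if i = j then D i else C) * y j
        = (if i = j then (D i - C) * y j else 0) + C * y j := by
      intro j; by_cases h : i = j
      · simp only [h, if_true]; ring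
      · simp only [h, if_false]; ring
    rw [Finset.sum_congr rfl fun j _ => h2 j, Finset.sum_add_distrib,
      Finset.sum_ite_eq Finset.univ i (fun j => (D i - C) * y j), ← Finset.mul_sum]
    simp
  rw [Finset.sum_congr rfl fun i _ => by rw [h1 i]]
  have h3 : ∀ i : Fin m, y i * ((D i - C) * y i + C * ∑ j, y j)
      = (D i - C) * y i ^ 2 + (C * ∑ j, y j) * y i := by intro i; ring
  rw [Finset.sum_congr rfl fun i _ => h3 i, Finset.sum_add_distrib, ← Finset.mul_sum]
  ring



/-- **Positive semidefiniteness of the auxiliary matrix `Y`.**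
Let `n ≥ 3` and let `u 1, …, u n` be nonzero reals with the cyclic convention `u (n+1) = u 1`.
Then the `(n-1) × (n-1)` real matrix (indexed here by `Fin (n-1)`, where the index `l`
corresponds to the paper's index `l + 2 ∈ {2, …, n}`) with diagonal entries
`u 2 ^ 2 / u 1 ^ 2 + n (n-1) (n-3) + (n-1)² * u (l+3) ^ 2 / u (l+2) ^ 2` and all off-diagonal
entries equal to `u 2 ^ 2 / u 1 ^ 2 - n (n-1)` is positive semidefinite. -/
theorem auxiliary_matrix_posSemidef (n : ℕ) (hn : 3 ≤ n) (u : ℕ → ℝ)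
    (hu : ∀ l, 1 ≤ l → l ≤ n → u l ≠ 0) (hcyc : u (n + 1) = u 1) :
    (Matrix.of fun l m : Fin (n - 1) =>
      if l = m then
        u 2 ^ 2 / u 1 ^ 2 + (n : ℝ) * ((n : ℝ) - 1) * ((n : ℝ) - 3) +
          ((n : ℝ) - 1) ^ 2 * (u (l.1 + 3)) ^ 2 / (u (l.1 + 2)) ^ 2
      else
        u 2 ^ 2 / u 1 ^ 2 - (n : ℝ) * ((n : ℝ) - 1)).PosSemidef := by
  have hu1 : u 1 ≠ 0 := hu 1 (by omega) (by omega)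
  have hu2 : u 2 ≠ 0 := hu 2 (by omega) (by omega)
  have hu1sq : (0:ℝ) < u 1 ^ 2 :=
    lt_of_le_of_ne (sq_nonneg _) (Ne.symm (pow_ne_zero 2 hu1))
  have hu2sq : (0:ℝ) < u 2 ^ 2 :=
    lt_of_le_of_ne (sq_nonneg _) (Ne.symm (pow_ne_zero 2 hu2))
  have ha : (0:ℝ) < u 2 ^ 2 / u 1 ^ 2 := div_pos hu2sq hu1sq
  have hcast : ((n - 1 : ℕ) : ℝ) = (n : ℝ) - 1 := by
    rw [Nat.cast_sub (by omega)]; norm_num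
  have husq : ∀ k, 1 ≤ k → k ≤ n → (0:ℝ) < u k ^ 2 := fun k h1 h2 =>
    lt_of_le_of_ne (sq_nonneg _) (Ne.symm (pow_ne_zero 2 (hu k h1 h2)))
  have hr : ∀ l : Fin (n-1), (0:ℝ) < u (l.1 + 3) ^ 2 / u (l.1 + 2) ^ 2 := by
    intro l
    have hl := l.2
    apply div_pos _ (husq _ (by omega) (by omega))
    by_cases h3 : l.1 + 3 ≤ n
    · exact husq _ (by omega) h3
    · have : l.1 + 3 = n + 1 := by omega
      rw [this, hcyc]
      exact husq 1 (by omega) (by omega)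
  -- telescoping product
  have htel : ∀ k, k ≤ n - 1 →
      ∏ l ∈ Finset.range k, (u (l+3)^2 / u (l+2)^2) = u (k+2)^2 / u 2^2 := by
    intro k
    induction k with
    | zero => intro _; simp [div_self (ne_of_gt hu2sq)]
    | succ k ih =>
      intro hk
      rw [Finset.prod_range_succ, ih (by omega)]
      have hk2 : u (k+2) ^ 2 ≠ 0 := ne_of_gt (husq (k+2) (by omega) (by omega))
      have hk2' : u (k+2) ≠ 0 := hu (k+2) (by omega) (by omega)
      field_simp
  have hprodra : (u 2^2 / u 1^2) * ∏ l : Fin (n-1), (u (l.1+3)^2 / u (l.1+2)^2) = 1 := by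
    have h1 : ∏ l : Fin (n-1), (u (l.1+3)^2 / u (l.1+2)^2)
        = ∏ l ∈ Finset.range (n-1), (u (l+3)^2 / u (l+2)^2) :=
      Fin.prod_univ_eq_prod_range (fun l => u (l+3)^2 / u (l+2)^2) (n-1)
    rw [h1, htel (n-1) le_rfl, show n - 1 + 2 = n + 1 by omega, hcyc]
    field_simp
  rw [Matrix.posSemidef_iff_dotProduct_mulVec]
  constructor
  · -- Hermitian
    show Matrix.conjTranspose _ = _
    ext i j
    simp only [Matrix.conjTranspose_apply, Matrix.of_apply, star_trivial]
    by_cases h : i = j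
    · subst h; rfl
    · rw [if_neg h, if_neg (Ne.symm h)]
  · intro y
    have hrw : dotProduct (star y) ((Matrix.of fun l m : Fin (n - 1) =>
        if l = m then
          u 2 ^ 2 / u 1 ^ 2 + (n : ℝ) * ((n : ℝ) - 1) * ((n : ℝ) - 3) +
            ((n : ℝ) - 1) ^ 2 * (u (l.1 + 3)) ^ 2 / (u (l.1 + 2)) ^ 2
        else
          u 2 ^ 2 / u 1 ^ 2 - (n : ℝ) * ((n : ℝ) - 1)) *ᵥ y)
        = ∑ i, y i * (∑ j, (if i = j then
            u 2 ^ 2 / u 1 ^ 2 + (n : ℝ) * ((n : ℝ) - 1) * ((n : ℝ) - 3) +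
              ((n : ℝ) - 1) ^ 2 * (u (i.1 + 3)) ^ 2 / (u (i.1 + 2)) ^ 2
          else u 2 ^ 2 / u 1 ^ 2 - (n : ℝ) * ((n : ℝ) - 1)) * y j) := by
      simp [dotProduct, Matrix.mulVec, Matrix.of_apply]
    have hform := quadform (n-1)
      (fun i : Fin (n-1) => u 2 ^ 2 / u 1 ^ 2 + (n : ℝ) * ((n : ℝ) - 1) * ((n : ℝ) - 3) +
        ((n : ℝ) - 1) ^ 2 * (u (i.1 + 3)) ^ 2 / (u (i.1 + 2)) ^ 2)
      (u 2 ^ 2 / u 1 ^ 2 - (n : ℝ) * ((n : ℝ) - 1)) y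
    have hkey := key (n-1) (by omega) (u 2^2 / u 1^2) ha
      (fun l : Fin (n-1) => u (l.1+3)^2 / u (l.1+2)^2) hr hprodra y
    rw [hcast] at hkey
    have hsplit : ∑ i : Fin (n-1),
        ((u 2 ^ 2 / u 1 ^ 2 + (n : ℝ) * ((n : ℝ) - 1) * ((n : ℝ) - 3) +
          ((n : ℝ) - 1) ^ 2 * (u (i.1 + 3)) ^ 2 / (u (i.1 + 2)) ^ 2)
          - (u 2 ^ 2 / u 1 ^ 2 - (n : ℝ) * ((n : ℝ) - 1))) * y i ^ 2
        = ((n:ℝ) - 1 + 1) * ((n:ℝ) - 1) * ((n:ℝ) - 1 - 1) * (∑ i : Fin (n-1), y i ^ 2)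
          + ((n:ℝ) - 1)^2 * ∑ i : Fin (n-1), (u (i.1+3)^2 / u (i.1+2)^2) * y i ^ 2 := by
      rw [Finset.mul_sum, Finset.mul_sum, ← Finset.sum_add_distrib]
      refine Finset.sum_congr rfl fun i _ => ?_
      ring
    rw [hrw, hform, hsplit]
    nlinarith [hkey]
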